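/- Let f : [0, ∞) → ℝ be continuous with f(0) = x, let a > 0, and let u ∈ (x − a, x). Denote by τ_u = inf{t > 0 : f(t) = u} the first hitting time of level u. Then the following are equivalent for t > 0: (i) T_D(a) = t, T_U(a) > t, and f(t) = u; (ii) τ_u = t and sup_{s ≤ t} f(s) = u + a. -/

import Mathlib

open Set ENNReal

noncomputable def DD (f : ℝ → ℝ) (t : ℝ) : ℝ := sSup (f '' Set.Icc 0 t) - f t
noncomputable def DU (f : ℝ → ℝ) (t : ℝ) : ℝ := f t - sInf (f '' Set.Icc 0 t)

/-- First time the process `g` hits level `a` (over `t ≥ 0`), with value `∞` if it never does. -/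
noncomputable def hitTime (g : ℝ → ℝ) (a : ℝ) : ℝ≥0∞ :=
  sInf {w : ℝ≥0∞ | ∃ t : ℝ, 0 ≤ t ∧ w = ENNReal.ofReal t ∧ g t = a}

/-- First hitting time `τ_u = inf {t > 0 : f t = u}`, with value `∞` if `f` never hits `u`. -/
noncomputable def tau (f : ℝ → ℝ) (u : ℝ) : ℝ≥0∞ :=
  sInf {w : ℝ≥0∞ | ∃ t : ℝ, 0 < t ∧ w = ENNReal.ofReal t ∧ f t = u}

/-! ### Auxiliary lemmas -/

lemma hitTime_le (g : ℝ → ℝ) {a s : ℝ} (hs : 0 ≤ s) (h : g s = a) :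
    hitTime g a ≤ ENNReal.ofReal s := sInf_le ⟨s, hs, rfl, h⟩

lemma le_hitTime (g : ℝ → ℝ) {a t : ℝ} (h : ∀ s, 0 ≤ s → g s = a → t ≤ s) :
    ENNReal.ofReal t ≤ hitTime g a := by
  refine le_sInf ?_
  rintro w ⟨s, hs, rfl, hgs⟩
  exact ENNReal.ofReal_le_ofReal (h s hs hgs)

lemma tau_le (f : ℝ → ℝ) {u s : ℝ} (hs : 0 < s) (h : f s = u) :
    tau f u ≤ ENNReal.ofReal s := sInf_le ⟨s, hs, rfl, h⟩

lemma le_tau (f : ℝ → ℝ) {u t : ℝ} (h : ∀ s, 0 < s → f s = u → t ≤ s) :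
    ENNReal.ofReal t ≤ tau f u := by
  refine le_sInf ?_
  rintro w ⟨s, hs, rfl, hfs⟩
  exact ENNReal.ofReal_le_ofReal (h s hs hfs)

lemma hitTime_val (g : ℝ → ℝ) {a t : ℝ} (ht : 0 ≤ t)
    (hg : ContinuousWithinAt g (Set.Ici 0) t)
    (h : hitTime g a = ENNReal.ofReal t) : g t = a := by
  by_contra hne
  have hev : g ⁻¹' {y | y ≠ a} ∈ nhdsWithin t (Set.Ici 0) :=
    hg (isOpen_ne.mem_nhds hne)
  obtain ⟨δ, hδ, hsub⟩ := Metric.mem_nhdsWithin_iff.mp hev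
  have hlb : ENNReal.ofReal (t + δ / 2) ≤ hitTime g a := by
    refine le_hitTime _ (fun s hs hgs => ?_)
    by_contra hlt
    push_neg at hlt
    have hts : t ≤ s := by
      have h1 : ENNReal.ofReal t ≤ ENNReal.ofReal s := h ▸ hitTime_le g hs hgs
      exact (ENNReal.ofReal_le_ofReal_iff hs).mp h1
    have : s ∈ Metric.ball t δ ∩ Set.Ici 0 := by
      constructor
      · rw [Metric.mem_ball, Real.dist_eq, abs_of_nonneg (by linarith)]
        linarith
      · exact hs
    exact (hsub this) hgs
  rw [h] at hlb
  have : t + δ / 2 ≤ t := (ENNReal.ofReal_le_ofReal_iff ht).mp hlb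
  linarith

lemma tau_val (f : ℝ → ℝ) {u t : ℝ} (ht : 0 < t)
    (hf : ContinuousWithinAt f (Set.Ici 0) t)
    (h : tau f u = ENNReal.ofReal t) : f t = u := by
  by_contra hne
  have hev : f ⁻¹' {y | y ≠ u} ∈ nhdsWithin t (Set.Ici 0) :=
    hf (isOpen_ne.mem_nhds hne)
  obtain ⟨δ, hδ, hsub⟩ := Metric.mem_nhdsWithin_iff.mp hev
  have hlb : ENNReal.ofReal (t + δ / 2) ≤ tau f u := by
    refine le_tau _ (fun s hs hfs => ?_)
    by_contra hlt
    push_neg at hlt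
    have hts : t ≤ s := by
      have h1 : ENNReal.ofReal t ≤ ENNReal.ofReal s := h ▸ tau_le f hs hfs
      exact (ENNReal.ofReal_le_ofReal_iff hs.le).mp h1
    have : s ∈ Metric.ball t δ ∩ Set.Ici 0 := by
      constructor
      · rw [Metric.mem_ball, Real.dist_eq, abs_of_nonneg (by linarith)]
        linarith
      · exact hs.le
    exact (hsub this) hfs
  rw [h] at hlb
  have : t + δ / 2 ≤ t := (ENNReal.ofReal_le_ofReal_iff ht.le).mp hlb
  linarith

lemma lt_hitTime (g : ℝ → ℝ) {a t : ℝ} (ht : 0 ≤ t)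
    (hg : ContinuousWithinAt g (Set.Ici 0) t)
    (h : ∀ s, 0 ≤ s → s ≤ t → g s ≠ a) :
    ENNReal.ofReal t < hitTime g a := by
  have hev : g ⁻¹' {y | y ≠ a} ∈ nhdsWithin t (Set.Ici 0) :=
    hg (isOpen_ne.mem_nhds (h t ht le_rfl))
  obtain ⟨δ, hδ, hsub⟩ := Metric.mem_nhdsWithin_iff.mp hev
  have hlb : ENNReal.ofReal (t + δ / 2) ≤ hitTime g a := by
    refine le_hitTime _ (fun s hs hgs => ?_)
    by_contra hlt
    push_neg at hlt
    rcases le_or_gt s t with h1 | h1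
    · exact h s hs h1 hgs
    · have : s ∈ Metric.ball t δ ∩ Set.Ici 0 := by
        constructor
        · rw [Metric.mem_ball, Real.dist_eq, abs_of_nonneg (by linarith)]
          linarith
        · exact hs
      exact (hsub this) hgs
  calc ENNReal.ofReal t < ENNReal.ofReal (t + δ / 2) := by
        rw [ENNReal.ofReal_lt_ofReal_iff (by linarith)]; linarith
    _ ≤ hitTime g a := hlb

lemma runSup_mono (f : ℝ → ℝ) (hf : ContinuousOn f (Set.Ici 0)) {s t : ℝ}
    (hs : 0 ≤ s) (hst : s ≤ t) :
    sSup (f '' Set.Icc 0 s) ≤ sSup (f '' Set.Icc 0 t) := by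
  refine csSup_le_csSup ?_ ?_ ?_
  · exact isCompact_Icc.bddAbove_image (hf.mono (fun r hr => hr.1))
  · exact ⟨f 0, mem_image_of_mem f ⟨le_refl 0, hs⟩⟩
  · exact Set.image_mono (Set.Icc_subset_Icc_right hst)

lemma le_runSup (f : ℝ → ℝ) (hf : ContinuousOn f (Set.Ici 0)) {s r : ℝ}
    (hr : r ∈ Set.Icc 0 s) : f r ≤ sSup (f '' Set.Icc 0 s) :=
  le_csSup (isCompact_Icc.bddAbove_image (hf.mono (fun q hq => hq.1)))
    (mem_image_of_mem f hr)

lemma runInf_le (f : ℝ → ℝ) (hf : ContinuousOn f (Set.Ici 0)) {s r : ℝ}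
    (hr : r ∈ Set.Icc 0 s) : sInf (f '' Set.Icc 0 s) ≤ f r :=
  csInf_le (isCompact_Icc.bddBelow_image (hf.mono (fun q hq => hq.1)))
    (mem_image_of_mem f hr)

lemma runSup_split (f : ℝ → ℝ) (hf : ContinuousOn f (Set.Ici 0)) {w v M : ℝ}
    (h0 : 0 ≤ w) (hwv : w ≤ v) (hM : ∀ r, w ≤ r → r ≤ v → f r ≤ M) :
    sSup (f '' Set.Icc 0 v) ≤ max (sSup (f '' Set.Icc 0 w)) M := by
  refine csSup_le ⟨f 0, mem_image_of_mem f ⟨le_refl 0, h0.trans hwv⟩⟩ ?_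
  rintro y ⟨r, hr, rfl⟩
  rcases le_or_gt r w with h1 | h1
  · exact le_max_of_le_left (le_runSup f hf ⟨hr.1, h1⟩)
  · exact le_max_of_le_right (hM r h1.le hr.2)

lemma runSup_continuousOn (f : ℝ → ℝ) (hf : ContinuousOn f (Set.Ici 0)) :
    ContinuousOn (fun s => sSup (f '' Set.Icc 0 s)) (Set.Ici 0) := by
  intro t ht
  rw [Metric.continuousWithinAt_iff]
  intro ε hε
  obtain ⟨δ, hδ, hδ'⟩ := Metric.continuousWithinAt_iff.mp (hf t ht) (ε / 3) (by linarith)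
  refine ⟨δ, hδ, fun s hs hst => ?_⟩
  have ht0 : (0 : ℝ) ≤ t := ht
  have hs0 : (0 : ℝ) ≤ s := hs
  rw [Real.dist_eq] at hst
  obtain ⟨hst1, hst2⟩ := abs_lt.mp hst
  have key : ∀ r, 0 ≤ r → |r - t| < δ → -(ε / 3) < f r - f t ∧ f r - f t < ε / 3 := by
    intro r hr hrd
    have : dist r t < δ := by rw [Real.dist_eq]; exact hrd
    have := hδ' hr this
    rw [Real.dist_eq] at this
    exact abs_lt.mp this
  rcases le_total s t with h1 | h1
  · -- s ≤ t
    have hmono := runSup_mono f hf hs0 h1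
    have hup : sSup (f '' Set.Icc 0 t) ≤ sSup (f '' Set.Icc 0 s) + 2 * (ε / 3) := by
      have hsplit := runSup_split f hf hs0 h1
        (M := f t + ε / 3) (fun r hr1 hr2 => by
          have := key r (hs0.trans hr1) (abs_lt.mpr ⟨by linarith, by linarith⟩)
          linarith [this.2])
      have hfs := key s hs0 (abs_lt.mpr ⟨by linarith, by linarith⟩)
      have hfsle : f s ≤ sSup (f '' Set.Icc 0 s) := le_runSup f hf ⟨hs0, le_rfl⟩
      have : f t + ε / 3 ≤ sSup (f '' Set.Icc 0 s) + 2 * (ε / 3) := by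
        linarith [hfs.1]
      calc sSup (f '' Set.Icc 0 t) ≤ max (sSup (f '' Set.Icc 0 s)) (f t + ε / 3) := hsplit
        _ ≤ sSup (f '' Set.Icc 0 s) + 2 * (ε / 3) := max_le (by linarith) this
    rw [Real.dist_eq]
    refine abs_lt.mpr ⟨by linarith, by linarith⟩
  · -- t ≤ s
    have hmono := runSup_mono f hf ht0 h1
    have hup : sSup (f '' Set.Icc 0 s) ≤ sSup (f '' Set.Icc 0 t) + ε / 3 := by
      have hsplit := runSup_split f hf ht0 h1
        (M := f t + ε / 3) (fun r hr1 hr2 => by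
          have := key r (ht0.trans hr1) (abs_lt.mpr ⟨by linarith, by linarith⟩)
          linarith [this.2])
      have hftle : f t ≤ sSup (f '' Set.Icc 0 t) := le_runSup f hf ⟨ht0, le_rfl⟩
      calc sSup (f '' Set.Icc 0 s) ≤ max (sSup (f '' Set.Icc 0 t)) (f t + ε / 3) := hsplit
        _ ≤ sSup (f '' Set.Icc 0 t) + ε / 3 := max_le (by linarith) (by linarith)
    rw [Real.dist_eq]
    refine abs_lt.mpr ⟨by linarith, by linarith⟩

lemma runInf_eq_neg (f : ℝ → ℝ) (s : ℝ) :
    sInf (f '' Set.Icc 0 s) = -sSup ((fun r => -f r) '' Set.Icc 0 s) := by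
  have : (fun r => -f r) '' Set.Icc 0 s = -(f '' Set.Icc 0 s) := by
    ext y; simp [Set.mem_neg, Set.mem_image]; constructor
    · rintro ⟨r, hr, rfl⟩; exact ⟨r, hr, by ring⟩
    · rintro ⟨r, hr, h⟩; exact ⟨r, hr, by linarith⟩
  rw [this, Real.sInf_def]

lemma runInf_continuousOn (f : ℝ → ℝ) (hf : ContinuousOn f (Set.Ici 0)) :
    ContinuousOn (fun s => sInf (f '' Set.Icc 0 s)) (Set.Ici 0) := by
  have h := (runSup_continuousOn (fun r => -f r) (hf.neg)).neg
  have heq : ∀ s, sInf (f '' Set.Icc 0 s) = -sSup ((fun r => -f r) '' Set.Icc 0 s) :=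
    runInf_eq_neg f
  simpa only [Pi.neg_def, ← heq] using h

lemma DD_continuousOn (f : ℝ → ℝ) (hf : ContinuousOn f (Set.Ici 0)) :
    ContinuousOn (DD f) (Set.Ici 0) := by
  exact (runSup_continuousOn f hf).sub hf

lemma DU_continuousOn (f : ℝ → ℝ) (hf : ContinuousOn f (Set.Ici 0)) :
    ContinuousOn (DU f) (Set.Ici 0) := by
  exact hf.sub (runInf_continuousOn f hf)

lemma DD_zero (f : ℝ → ℝ) : DD f 0 = 0 := by
  unfold DD
  rw [Set.Icc_self, Set.image_singleton, csSup_singleton, sub_self]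

lemma DU_zero (f : ℝ → ℝ) : DU f 0 = 0 := by
  unfold DU
  rw [Set.Icc_self, Set.image_singleton, csInf_singleton, sub_self]

theorem stmt_3 (f : ℝ → ℝ) (x : ℝ) (hf : ContinuousOn f (Set.Ici 0)) (hx : f 0 = x)
    (a : ℝ) (ha : 0 < a) (u : ℝ) (hu : u ∈ Set.Ioo (x - a) x) (t : ℝ) (ht : 0 < t) :
    (hitTime (DD f) a = ENNReal.ofReal t ∧ ENNReal.ofReal t < hitTime (DU f) a ∧ f t = u)
      ↔ (tau f u = ENNReal.ofReal t ∧ sSup (f '' Set.Icc 0 t) = u + a) := by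
  obtain ⟨hua, hux⟩ := hu
  have hDDc := DD_continuousOn f hf
  have hDUc := DU_continuousOn f hf
  constructor
  · rintro ⟨hDDt, hDUt, hft⟩
    have hDDval : DD f t = a := hitTime_val (DD f) ht.le (hDDc t ht.le) hDDt
    have hsup : sSup (f '' Set.Icc 0 t) = u + a := by
      have : sSup (f '' Set.Icc 0 t) - f t = a := hDDval
      rw [hft] at this; linarith
    have hnoDD : ∀ s, 0 ≤ s → s < t → DD f s ≠ a := by
      intro s hs hst hcon
      have h1 : ENNReal.ofReal t ≤ ENNReal.ofReal s := hDDt ▸ hitTime_le (DD f) hs hcon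
      have := (ENNReal.ofReal_le_ofReal_iff hs).mp h1
      linarith
    have hnoDU : ∀ s, 0 ≤ s → s ≤ t → DU f s ≠ a := by
      intro s hs hst hcon
      have h1 : hitTime (DU f) a ≤ ENNReal.ofReal s := hitTime_le (DU f) hs hcon
      have h2 : ENNReal.ofReal s ≤ ENNReal.ofReal t := ENNReal.ofReal_le_ofReal hst
      exact absurd (lt_of_lt_of_le hDUt (h1.trans h2)).false (by simp)
    have htau_lb : ∀ s, 0 < s → f s = u → t ≤ s := by
      intro s hs hfs
      by_contra hlt
      push_neg at hlt
      obtain ⟨r, hr, hrsup⟩ :=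
        isCompact_Icc.exists_sSup_image_eq (Set.nonempty_Icc.mpr ht.le)
          (hf.mono (fun q hq => hq.1))
      rw [hsup] at hrsup
      rcases le_or_gt r s with h1 | h1
      · -- sup attained before s : DD f s ≥ a
        have hfr : f r ≤ sSup (f '' Set.Icc 0 s) := le_runSup f hf ⟨hr.1, h1⟩
        have hDDs : a ≤ DD f s := by
          simp only [DD, hfs]; linarith [hfr, hrsup]
        have hivt : a ∈ DD f '' Set.Icc 0 s := by
          have := intermediate_value_Icc hs.le
            (hDDc.mono (fun q hq => (Set.mem_Icc.mp hq).1))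
          apply this
          rw [DD_zero]
          exact ⟨ha.le, hDDs⟩
        obtain ⟨q, hq, hqa⟩ := hivt
        exact hnoDD q hq.1 (lt_of_le_of_lt hq.2 hlt) hqa
      · -- sup attained after s : DU f r ≥ a
        have hinf : sInf (f '' Set.Icc 0 r) ≤ f s := runInf_le f hf ⟨hs.le, h1.le⟩
        have hDUr : a ≤ DU f r := by
          simp only [DU]; rw [← hrsup] at *; rw [hfs] at hinf; linarith
        have hivt : a ∈ DU f '' Set.Icc 0 r := by
          have := intermediate_value_Icc hr.1
            (hDUc.mono (fun q hq => (Set.mem_Icc.mp hq).1))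
          apply this
          rw [DU_zero]
          exact ⟨ha.le, hDUr⟩
        obtain ⟨q, hq, hqa⟩ := hivt
        exact hnoDU q hq.1 (hq.2.trans hr.2) hqa
    have htau : tau f u = ENNReal.ofReal t :=
      le_antisymm (tau_le f ht hft) (le_tau f htau_lb)
    exact ⟨htau, hsup⟩
  · rintro ⟨htau, hsup⟩
    have hft : f t = u := tau_val f ht (hf t ht.le) htau
    have hnohit : ∀ s, 0 < s → s < t → f s ≠ u := by
      intro s hs hst hcon
      have h1 : ENNReal.ofReal t ≤ ENNReal.ofReal s := htau ▸ tau_le f hs hcon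
      have := (ENNReal.ofReal_le_ofReal_iff hs.le).mp h1
      linarith
    have hgt : ∀ s, 0 ≤ s → s < t → u < f s := by
      intro s hs hst
      by_contra hle
      push_neg at hle
      rcases eq_or_lt_of_le hle with heq | hlt
      · rcases eq_or_lt_of_le hs with h0 | h0
        · rw [← h0, hx] at heq; linarith
        · exact hnohit s h0 hst heq
      · have hivt : u ∈ f '' Set.Icc 0 s := by
          have := intermediate_value_Icc' hs
            (hf.mono (fun q hq => (Set.mem_Icc.mp hq).1))
          apply this
          rw [hx]
          exact ⟨hlt.le, hux.le⟩
        obtain ⟨q, hq, hqu⟩ := hivt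
        have hq0 : 0 < q := by
          rcases eq_or_lt_of_le hq.1 with h0 | h0
          · rw [← h0, hx] at hqu; linarith
          · exact h0
        exact hnohit q hq0 (lt_of_le_of_lt hq.2 hst) hqu
    have hDDt : DD f t = a := by simp only [DD, hsup, hft]; ring
    have hnoDD : ∀ s, 0 ≤ s → s < t → DD f s ≠ a := by
      intro s hs hst hcon
      have hs0 : 0 < s := by
        rcases eq_or_lt_of_le hs with h0 | h0
        · rw [← h0, DD_zero] at hcon; linarith
        · exact h0
      have hle : sSup (f '' Set.Icc 0 s) ≤ u + a := hsup ▸ runSup_mono f hf hs hst.le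
      have : f s ≤ u := by
        simp only [DD] at hcon
        linarith
      exact absurd this (not_le.mpr (hgt s hs hst))
    have hHitDD : hitTime (DD f) a = ENNReal.ofReal t := by
      refine le_antisymm (hitTime_le (DD f) ht.le hDDt) (le_hitTime (DD f) ?_)
      intro s hs hDDs
      by_contra hlt
      push_neg at hlt
      exact hnoDD s hs hlt hDDs
    have hnoDU : ∀ s, 0 ≤ s → s ≤ t → DU f s ≠ a := by
      intro s hs hst hcon
      have hs0 : 0 < s := by
        rcases eq_or_lt_of_le hs with h0 | h0
        · rw [← h0, DU_zero] at hcon; linarith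
        · exact h0
      obtain ⟨r, hr, hrinf⟩ :=
        isCompact_Icc.exists_sInf_image_eq (Set.nonempty_Icc.mpr hs)
          (hf.mono (fun q hq => hq.1))
      rcases lt_or_eq_of_le (hr.2.trans hst) with hrt | hrt
      · -- r < t : f r > u, so f s > u + a ≥ sup, contradiction
        have hfr : u < f r := hgt r hr.1 hrt
        have hfs : f s = sInf (f '' Set.Icc 0 s) + a := by
          simp only [DU] at hcon; linarith
        have hfsle : f s ≤ u + a := hsup ▸ le_runSup f hf ⟨hs, hst⟩
        rw [hrinf] at hfs
        linarith
      · -- r = t forces s = t, but then f t = sInf + a ≥ u + a > u = f t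
        have hst' : s = t := le_antisymm hst (hrt ▸ hr.2)
        have : f r = u := by rw [hrt, hft]
        have hfs : f s = sInf (f '' Set.Icc 0 s) + a := by
          simp only [DU] at hcon; linarith
        rw [hrinf] at hfs
        rw [hst', hft] at hfs
        rw [this] at hfs
        linarith
    have hHitDU : ENNReal.ofReal t < hitTime (DU f) a :=
      lt_hitTime (DU f) ht.le (hDUc t ht.le) hnoDU
    exact ⟨hHitDD, hHitDU, hft⟩
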